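/- Let X be a binary random variable and Y a random variable on a finite alphabet, and let 0 < \delta < 1/2. If the Bhattacharyya parameter satisfies Z(X|Y) \geq 1 - \delta, then the conditional entropy satisfies H(X|Y) \geq 1 - 2\delta. -/

import Mathlib

open scoped BigOperators

section AuxBhattacharyya

set_option maxHeartbeats 2000000 in
lemma region1 (t : ℝ) (h0 : 0 ≤ t) (h1 : t ≤ 1/2) :
    (1+t) * Real.log (1+t) + (1-t) * Real.log (1-t) ≤ 2 * Real.log 2 * t^2 := by
  have hlt : |t| < 1 := by rw [abs_of_nonneg h0]; linarith
  have hA := Real.abs_log_sub_add_sum_range_le (x := -t) (by rwa [abs_neg]) 6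
  have hB := Real.abs_log_sub_add_sum_range_le (x := t) hlt 6
  rw [abs_le] at hA hB
  simp only [Finset.sum_range_succ, Finset.sum_range_zero] at hA hB
  rw [abs_neg] at hA; rw [abs_of_nonneg h0] at hA hB
  have hden : (0:ℝ) < 1 - t := by linarith
  have hA' : Real.log (1+t) ≤ t - t^2/2 + t^3/3 - t^4/4 + t^5/5 - t^6/6 + t^7/(1-t) := by
    have h2 := hA.2
    rw [show (1:ℝ) - -t = 1 + t by ring] at h2
    push_cast at h2
    nlinarith [h2]
  have hB' : Real.log (1-t) ≤ -(t + t^2/2 + t^3/3 + t^4/4 + t^5/5 + t^6/6) + t^7/(1-t) := by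
    have h2 := hB.2
    push_cast at h2
    nlinarith [h2]
  have hc : (0.6931 : ℝ) ≤ Real.log 2 := by linarith [Real.log_two_gt_d9]
  -- combine
  have hE : t^7/(1-t) ≤ 2*t^7 := by
    rw [div_le_iff₀ hden]; nlinarith [pow_nonneg h0 7]
  have h1t : 0 ≤ 1 + t := by linarith
  have h1t' : 0 ≤ 1 - t := by linarith
  calc (1+t) * Real.log (1+t) + (1-t) * Real.log (1-t)
      ≤ (1+t) * (t - t^2/2 + t^3/3 - t^4/4 + t^5/5 - t^6/6 + t^7/(1-t))
        + (1-t) * (-(t + t^2/2 + t^3/3 + t^4/4 + t^5/5 + t^6/6) + t^7/(1-t)) := by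
        gcongr
    _ = t^2 + t^4/6 + t^6/15 + 2 * (t^7/(1-t)) := by field_simp; ring
    _ ≤ t^2 + t^4/6 + t^6/15 + 2 * (2*t^7) := by linarith
    _ ≤ 2 * Real.log 2 * t^2 := by
        have ht2 : t^2 ≤ 1/4 := by nlinarith
        have ht4 : t^4 ≤ t^2/4 := by nlinarith [sq_nonneg t]
        have ht6 : t^6 ≤ t^2/16 := by nlinarith [pow_nonneg h0 4, sq_nonneg (t^2), pow_nonneg h0 2]
        have ht7 : t^7 ≤ t^2/32 := by nlinarith [pow_nonneg h0 6, pow_nonneg h0 5, pow_nonneg h0 2]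
        nlinarith [sq_nonneg t]

lemma region2 (t : ℝ) (h0 : 1/2 ≤ t) (h1 : t ≤ 1) :
    (1+t) * Real.log (1+t) + (1-t) * Real.log (1-t) ≤ 2 * Real.log 2 * t^2 := by
  rcases eq_or_lt_of_le h1 with rfl | h1'
  · norm_num [Real.log_zero]
  · have hden : (0:ℝ) < 1 - t := by linarith
    have hc : Real.log 2 < 0.6932 := by linarith [Real.log_two_lt_d9]
    have hc' : (0.6931:ℝ) < Real.log 2 := by linarith [Real.log_two_gt_d9]
    have hA : Real.log (1+t) ≤ Real.log 2 + (t-1)/2 := by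
      have h := Real.log_le_sub_one_of_pos (x := (1+t)/2) (by linarith)
      rw [Real.log_div (by linarith) (by norm_num)] at h
      linarith
    have hB : Real.log (1-t) ≤ -Real.log 2 + 2*(1-t) - 1 := by
      have h := Real.log_le_sub_one_of_pos (x := 2*(1-t)) (by linarith)
      rw [Real.log_mul (by norm_num) (by linarith)] at h
      linarith
    have h1t : (0:ℝ) ≤ 1 + t := by linarith
    calc (1+t) * Real.log (1+t) + (1-t) * Real.log (1-t)
        ≤ (1+t) * (Real.log 2 + (t-1)/2) + (1-t) * (-Real.log 2 + 2*(1-t) - 1) := by gcongr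
      _ ≤ 2 * Real.log 2 * t^2 := by nlinarith [mul_nonneg hden.le (by nlinarith : (5*t-1)/2 - 2*Real.log 2*t ≥ 0)]

lemma scalarL (t : ℝ) (h0 : 0 ≤ t) (h1 : t ≤ 1) :
    (1+t) * Real.log (1+t) + (1-t) * Real.log (1-t) ≤ 2 * Real.log 2 * t^2 := by
  rcases le_total t (1/2) with h | h
  · exact region1 t h0 h
  · exact region2 t h h1

lemma key_ordered (a b : ℝ) (ha : 0 ≤ a) (hab : a ≤ b) :
    4 * Real.sqrt (a*b) - (a+b) ≤
      -(a * Real.logb 2 (a/(a+b)) + b * Real.logb 2 (b/(a+b))) := by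
  rcases eq_or_lt_of_le ha with rfl | ha'
  · rcases eq_or_lt_of_le hab with rfl | hb'
    · norm_num
    · simp only [zero_mul, Real.sqrt_zero, zero_add, mul_zero, zero_mul]
      rw [div_self hb'.ne']
      simp
      linarith
  · -- a > 0, hence b > 0, s > 0
    have hb : 0 < b := lt_of_lt_of_le ha' hab
    set s := a + b with hs
    have hs0 : 0 < s := by positivity
    set t := (b - a)/s with ht
    have ht0 : 0 ≤ t := div_nonneg (by linarith) hs0.le
    have ht1 : t < 1 := by
      rw [ht, div_lt_one hs0]; linarith
    have has : a/s = (1-t)/2 := by rw [ht, hs]; field_simp; ring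
    have hbs : b/s = (1+t)/2 := by rw [ht, hs]; field_simp; ring
    have hl2 : (0:ℝ) < Real.log 2 := Real.log_pos (by norm_num)
    -- step 1 : 4√(ab) - s ≤ 4ab/s
    have step1 : 4 * Real.sqrt (a*b) - s ≤ 4*(a*b)/s := by
      have h1 := sq_nonneg (2 * Real.sqrt (a*b) - s)
      have h2 : Real.sqrt (a*b) ^ 2 = a*b := Real.sq_sqrt (by positivity)
      rw [le_div_iff₀ hs0]
      nlinarith [Real.sqrt_nonneg (a*b)]
    -- step 2 : 4ab/s * log 2 ≤ -(a log(a/s) + b log(b/s))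
    have hlog_a : Real.log (a/s) = Real.log (1-t) - Real.log 2 := by
      rw [has, Real.log_div (by linarith) (by norm_num)]
    have hlog_b : Real.log (b/s) = Real.log (1+t) - Real.log 2 := by
      rw [hbs, Real.log_div (by positivity) (by norm_num)]
    have hA : a = s * (1-t)/2 := by
      have := has
      field_simp at this
      nlinarith [this]
    have hB : b = s * (1+t)/2 := by
      have := hbs
      field_simp at this
      nlinarith [this]
    have step2 : 4*(a*b)/s * Real.log 2 ≤ -(a * Real.log (a/s) + b * Real.log (b/s)) := by
      rw [hlog_a, hlog_b]
      have hab4 : 4*(a*b)/s = s * (1 - t^2) := by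
        rw [hA, hB]; field_simp; ring
      rw [hab4]
      have hL := scalarL t ht0 ht1.le
      have expand : -(a * (Real.log (1-t) - Real.log 2) + b * (Real.log (1+t) - Real.log 2))
          = s * Real.log 2 - s/2 * ((1+t) * Real.log (1+t) + (1-t) * Real.log (1-t)) := by
        rw [hA, hB]; ring
      rw [expand]
      have : s/2 * ((1+t) * Real.log (1+t) + (1-t) * Real.log (1-t))
          ≤ s/2 * (2 * Real.log 2 * t^2) := by
        apply mul_le_mul_of_nonneg_left hL (by positivity)
      nlinarith [this]
    -- combine
    have hdiv : -(a * Real.logb 2 (a/s) + b * Real.logb 2 (b/s))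
        = (-(a * Real.log (a/s) + b * Real.log (b/s))) / Real.log 2 := by
      simp [Real.logb, ← add_div]; ring
    rw [hdiv]
    rw [le_div_iff₀ hl2]
    calc (4 * Real.sqrt (a*b) - s) * Real.log 2 ≤ (4*(a*b)/s) * Real.log 2 := by
          apply mul_le_mul_of_nonneg_right step1 hl2.le
      _ ≤ -(a * Real.log (a/s) + b * Real.log (b/s)) := step2

lemma key (a b : ℝ) (ha : 0 ≤ a) (hb : 0 ≤ b) :
    4 * Real.sqrt (a*b) - (a+b) ≤
      -(a * Real.logb 2 (a/(a+b)) + b * Real.logb 2 (b/(a+b))) := by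
  rcases le_total a b with h | h
  · exact key_ordered a b ha h
  · have := key_ordered b a hb h
    rw [mul_comm b a, add_comm b a] at this
    linarith [this]

end AuxBhattacharyya

/-- For binary `X` and finite-alphabet `Y`, if the Bhattacharyya parameter satisfies
`Z(X|Y) ≥ 1 - δ` for some `0 < δ < 1/2`, then `H(X|Y) ≥ 1 - 2δ` (entropy in bits). -/
theorem condEntropy_ge_of_bhattacharyya_ge {Y : Type*} [Fintype Y]
    (p : Fin 2 → Y → ℝ) (hp : ∀ x y, 0 ≤ p x y)
    (hsum : ∑ x, ∑ y, p x y = 1)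
    (δ : ℝ) (hδ0 : 0 < δ) (hδ1 : δ < 1/2)
    (hZ : 1 - δ ≤ 2 * ∑ y, Real.sqrt (p 0 y * p 1 y)) :
    1 - 2 * δ ≤ -∑ x, ∑ y, p x y * Real.logb 2 (p x y / ∑ x', p x' y) := by
  have hexp : ∀ y : Y, (∑ x' : Fin 2, p x' y) = p 0 y + p 1 y := fun y => by
    rw [Fin.sum_univ_two]
  rw [Fin.sum_univ_two] at hsum ⊢
  simp only [hexp]
  have hq : ∑ y, (p 0 y + p 1 y) = 1 := by
    rw [Finset.sum_add_distrib]; exact hsum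
  have hterm : ∀ y : Y,
      4 * Real.sqrt (p 0 y * p 1 y) - (p 0 y + p 1 y) ≤
        -(p 0 y * Real.logb 2 (p 0 y / (p 0 y + p 1 y))
          + p 1 y * Real.logb 2 (p 1 y / (p 0 y + p 1 y))) :=
    fun y => key (p 0 y) (p 1 y) (hp 0 y) (hp 1 y)
  have hsum_le : ∑ y, (4 * Real.sqrt (p 0 y * p 1 y) - (p 0 y + p 1 y)) ≤
      ∑ y, -(p 0 y * Real.logb 2 (p 0 y / (p 0 y + p 1 y))
          + p 1 y * Real.logb 2 (p 1 y / (p 0 y + p 1 y))) :=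
    Finset.sum_le_sum fun y _ => hterm y
  rw [Finset.sum_sub_distrib, Finset.sum_neg_distrib] at hsum_le
  rw [← Finset.mul_sum, hq] at hsum_le
  have : -(∑ y, p 0 y * Real.logb 2 (p 0 y / (p 0 y + p 1 y))
      + ∑ y, p 1 y * Real.logb 2 (p 1 y / (p 0 y + p 1 y)))
      = ∑ y, -(p 0 y * Real.logb 2 (p 0 y / (p 0 y + p 1 y))
          + p 1 y * Real.logb 2 (p 1 y / (p 0 y + p 1 y))) := by
    rw [← Finset.sum_add_distrib, ← Finset.sum_neg_distrib]
  rw [this]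
  have h2 : (∑ y, -(p 0 y * Real.logb 2 (p 0 y / (p 0 y + p 1 y))
          + p 1 y * Real.logb 2 (p 1 y / (p 0 y + p 1 y))))
      = -∑ y, (p 0 y * Real.logb 2 (p 0 y / (p 0 y + p 1 y))
          + p 1 y * Real.logb 2 (p 1 y / (p 0 y + p 1 y))) := Finset.sum_neg_distrib _
  rw [h2]
  linarith [hsum_le]
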